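/- Both ξ_{[123]} and u_{[123]} computed from the super lattice potential KdV on a cube are independent of the initial value u (though u_{[123]} depends on ξ), hence the system does not possess the tetrahedron property. -/

import Mathlib

/-- A supercommutative (Grassmann) algebra structure on a ring `A`: a pair of parity
predicates with even elements central and odd elements pairwise anticommuting. -/
structure SuperCommRing (A : Type*) [Ring A] where
  ev : A → Prop
  od : A → Prop
  ev_one : ev 1
  ev_add : ∀ {a b : A}, ev a → ev b → ev (a + b)
  od_add : ∀ {a b : A}, od a → od b → od (a + b)
  ev_neg : ∀ {a : A}, ev a → ev (-a)
  od_neg : ∀ {a : A}, od a → od (-a)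
  ev_mul : ∀ {a b : A}, ev a → ev b → ev (a * b)
  od_mul_od : ∀ {a b : A}, od a → od b → ev (a * b)
  ev_mul_od : ∀ {a b : A}, ev a → od b → od (a * b)
  od_mul_ev : ∀ {a b : A}, od a → ev b → od (a * b)
  ev_comm : ∀ {a : A} (b : A), ev a → a * b = b * a
  od_anticomm : ∀ {a b : A}, od a → od b → a * b = -(b * a)

/-- A pair of derivations on a supercommutative algebra: the spatial derivative `dx`
(an even derivation) and the superderivative `ds` (an odd derivation, `𝒟 = ∂_θ + θ∂_x`)
with `𝒟² = ∂_x` and the graded Leibniz rule. -/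
structure SuperDer {A : Type*} [Ring A] [Algebra ℚ A] (S : SuperCommRing A) where
  dx : A → A
  ds : A → A
  dx_add : ∀ a b : A, dx (a + b) = dx a + dx b
  dx_smul : ∀ (q : ℚ) (a : A), dx (q • a) = q • dx a
  dx_mul : ∀ a b : A, dx (a * b) = dx a * b + a * dx b
  ds_add : ∀ a b : A, ds (a + b) = ds a + ds b
  ds_smul : ∀ (q : ℚ) (a : A), ds (q • a) = q • ds a
  ds_mul_ev : ∀ a b : A, S.ev a → ds (a * b) = ds a * b + a * ds b
  ds_mul_od : ∀ a b : A, S.od a → ds (a * b) = ds a * b - a * ds b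
  ds_ds : ∀ a : A, ds (ds a) = dx a
  dx_ev : ∀ a : A, S.ev a → S.ev (dx a)
  dx_od : ∀ a : A, S.od a → S.od (dx a)
  ds_ev : ∀ a : A, S.ev a → S.od (ds a)
  ds_od : ∀ a : A, S.od a → S.ev (ds a)

section LatticeMaps

variable {A : Type*} [Ring A] [Algebra ℚ A]

/-- `f_{[ij]} = 2(p_i+p_j)/D_{ij}`, given a (two-sided) inverse `E` of the denominator
`D_{ij} = 2(p_j−p_i) + u_{[i]} − u_{[j]}`. -/
def latF (pi pj : ℚ) (E : A) : A := (2*(pi + pj)) • E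

/-- `g_{[ij]} = −(p_i+p_j)(4(p_j−p_i) + u_{[i]} − u_{[j]})/D_{ij}²`. -/
def latG (pi pj : ℚ) (ui uj E : A) : A :=
  -((pi + pj) • ((((4*(pj - pi)) • (1:A)) + ui - uj) * (E * E)))

/-- `ξ_{[ij]} = ξ + f_{[ij]}(ξ_{[i]} − ξ_{[j]})` (also used for the triple values). -/
def latXi (ξ ξi ξj f : A) : A := ξ + f * (ξi - ξj)

/-- `u_{[ij]} = u + f_{[ij]}(u_{[i]} − u_{[j]}) + g_{[ij]}(ξ_{[i]} − ξ_{[j]})(ξ_{[j]} − ξ)`. -/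
def latU (u ui uj ξ ξi ξj f g : A) : A :=
  u + f * (ui - uj) + g * ((ξi - ξj) * (ξj - ξ))

end LatticeMaps

/-- Both `ξ_{[123]}` and `u_{[123]}`, computed from the super lattice
potential KdV on a cube, are independent of the initial value `u`: the values obtained
from two different initial data `u` agree (hence the system does not possess the
tetrahedron property). All denominators are assumed invertible; note that they are
themselves independent of `u`, so the inverses `E₁₃, E₂₃, E₁₂₃` serve for every `u`. -/
theorem super_lpkdv_triple_values_independent_of_u
    {A : Type*} [Ring A] [Algebra ℚ A] (S : SuperCommRing A)
    (p1 p2 p3 : ℚ) (ξ ξ1 ξ2 ξ3 u0 u1 u2 u3 : A)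
    (hξ : S.od ξ) (hξ1 : S.od ξ1) (hξ2 : S.od ξ2) (hξ3 : S.od ξ3)
    (hu0 : S.ev u0) (hu1 : S.ev u1) (hu2 : S.ev u2) (hu3 : S.ev u3)
    (E13 E23 E123 : A)
    (hev : S.ev E13 ∧ S.ev E23 ∧ S.ev E123)
    (hE13 : ((2*(p3 - p1)) • (1:A) + u1 - u3) * E13 = 1
          ∧ E13 * ((2*(p3 - p1)) • (1:A) + u1 - u3) = 1)
    (hE23 : ((2*(p3 - p2)) • (1:A) + u2 - u3) * E23 = 1
          ∧ E23 * ((2*(p3 - p2)) • (1:A) + u2 - u3) = 1)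
    (hE123 : ((2*(p2 - p1)) • (1:A)
          + latU u0 u1 u3 ξ ξ1 ξ3 (latF p1 p3 E13) (latG p1 p3 u1 u3 E13)
          - latU u0 u2 u3 ξ ξ2 ξ3 (latF p2 p3 E23) (latG p2 p3 u2 u3 E23)) * E123 = 1
        ∧ E123 * ((2*(p2 - p1)) • (1:A)
          + latU u0 u1 u3 ξ ξ1 ξ3 (latF p1 p3 E13) (latG p1 p3 u1 u3 E13)
          - latU u0 u2 u3 ξ ξ2 ξ3 (latF p2 p3 E23) (latG p2 p3 u2 u3 E23)) = 1) :
    -- the triple values as functions of the initial datum u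
    let u13 : A → A := fun w =>
      latU w u1 u3 ξ ξ1 ξ3 (latF p1 p3 E13) (latG p1 p3 u1 u3 E13)
    let u23 : A → A := fun w =>
      latU w u2 u3 ξ ξ2 ξ3 (latF p2 p3 E23) (latG p2 p3 u2 u3 E23)
    let ξ13 : A → A := fun _ => latXi ξ ξ1 ξ3 (latF p1 p3 E13)
    let ξ23 : A → A := fun _ => latXi ξ ξ2 ξ3 (latF p2 p3 E23)
    let ξ123 : A → A := fun w => latXi ξ3 (ξ13 w) (ξ23 w) (latF p1 p2 E123)
    let u123 : A → A := fun w =>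
      latU u3 (u13 w) (u23 w) ξ3 (ξ13 w) (ξ23 w) (latF p1 p2 E123)
        (latG p1 p2 (u13 w) (u23 w) E123)
    ∀ w w' : A, ξ123 w = ξ123 w' ∧ u123 w = u123 w' := by
  intro u13 u23 ξ13 ξ23 ξ123 u123 w w'
  have hd : u13 w - u23 w = u13 w' - u23 w' := by
    simp only [u13, u23, latU]; abel
  have key : ∀ a b a' b' : A, a - b = a' - b' →
      latU u3 a b ξ3 (ξ13 w) (ξ23 w) (latF p1 p2 E123) (latG p1 p2 a b E123)
    = latU u3 a' b' ξ3 (ξ13 w') (ξ23 w') (latF p1 p2 E123) (latG p1 p2 a' b' E123) := by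
    intro a b a' b' h
    simp only [latU, latG, add_sub_assoc, h, ξ13, ξ23]
  exact ⟨rfl, key _ _ _ _ hd⟩
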